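/- Let μ be a Bloch weight satisfying: there exists B > 0 with μ(1 - d/2) ≥ B μ(1-d) for all d ∈ (0,1); and suppose that for each q > 1 there exist A > 1 and y_0 ≥ 1 such that whenever x > q y and y > y_0 one has μ(1 - 1/y) > A μ(1 - 1/x). Let f(z) = ∑_k a_{n_k} z^{n_k} be a holomorphic function on the open unit disk whose exponents form a Hadamard gap sequence with ratio λ > 1, and suppose sup_k n_k |a_{n_k}| μ(1 - 1/n_k) < ∞. Then sup_{z ∈ 𝔻} μ(|z|) |f'(z)| < ∞. -/

import Mathlib

private lemma geo_sum_le_aux (σ : ℝ) (h0 : 0 ≤ σ) (h1 : σ < 1) (S : Finset ℕ) :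
    ∑ i ∈ S, σ ^ i ≤ (1 - σ)⁻¹ := by
  obtain ⟨m, hm⟩ := S.exists_nat_subset_range
  have h2 : 0 < 1 - σ := by linarith
  calc ∑ i ∈ S, σ ^ i ≤ ∑ i ∈ Finset.range m, σ ^ i :=
        Finset.sum_le_sum_of_subset_of_nonneg hm (fun i _ _ => pow_nonneg h0 i)
    _ ≤ (1 - σ)⁻¹ := by
        rw [geom_sum_eq (ne_of_lt h1)]
        have e : (σ ^ m - 1) / (σ - 1) = (1 - σ ^ m) / (1 - σ) := by
          rw [← neg_div_neg_eq]; ring_nf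
        rw [e, div_le_iff₀ h2, inv_mul_cancel₀ (ne_of_gt h2)]
        nlinarith [pow_nonneg h0 m]

private lemma geo_sum_inj_aux (σ : ℝ) (h0 : 0 ≤ σ) (h1 : σ < 1) (F : Finset ℕ) (φ : ℕ → ℕ)
    (hφ : ∀ k ∈ F, ∀ l ∈ F, φ k = φ l → k = l) :
    ∑ k ∈ F, σ ^ (φ k) ≤ (1 - σ)⁻¹ := by
  calc ∑ k ∈ F, σ ^ φ k = ∑ i ∈ F.image φ, σ ^ i := (Finset.sum_image hφ).symm
    _ ≤ (1 - σ)⁻¹ := geo_sum_le_aux σ h0 h1 _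

private lemma pow_le_exp_aux (p : ℕ) {s : ℝ} (hs : 0 ≤ s) :
    s ^ p ≤ (p.factorial : ℝ) * Real.exp s := by
  have h := Real.sum_le_exp_of_nonneg hs (p + 1)
  have h2 : s ^ p / (p.factorial : ℝ) ≤ Real.exp s :=
    le_trans (Finset.single_le_sum (f := fun i => s ^ i / (i.factorial : ℝ))
      (fun i _ => by positivity) (Finset.self_mem_range_succ p)) h
  have hp : (0:ℝ) < (p.factorial : ℝ) := by positivity
  rw [div_le_iff₀ hp] at h2
  linarith [h2]

private lemma mem_Ico_aux {w : ℝ} (hw : 1 ≤ w) : 1 - 1/w ∈ Set.Ico (0:ℝ) 1 := by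
  have hw0 : 0 < w := lt_of_lt_of_le one_pos hw
  constructor
  · have : 1/w ≤ 1 := by rw [div_le_one hw0]; exact hw
    linarith
  · have : 0 < 1/w := by positivity
    linarith

private lemma L1_aux (B : ℝ) (hB : 0 < B) (ε : ℝ) (hε : 0 < ε) :
    ∃ D : ℝ, 1 ≤ D ∧ ∀ (m : ℕ) (t : ℝ), (2:ℝ) ^ m ≤ 2 * t →
      (B⁻¹) ^ m ≤ D * Real.exp (ε * t) := by
  obtain ⟨p, hp⟩ := pow_unbounded_of_one_lt (B⁻¹) (one_lt_two (α := ℝ))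
  refine ⟨max 1 ((p.factorial : ℝ) * (2/ε) ^ p), le_max_left _ _, ?_⟩
  intro m t ht
  have htpos : 0 < t := by
    have h2 : (0:ℝ) < 2 ^ m := by positivity
    linarith
  have h1 : (B⁻¹) ^ m ≤ (2*t) ^ p := by
    calc (B⁻¹) ^ m ≤ ((2:ℝ)^p) ^ m := pow_le_pow_left₀ (by positivity) hp.le m
      _ = ((2:ℝ)^m) ^ p := by rw [← pow_mul, ← pow_mul, Nat.mul_comm]
      _ ≤ (2*t) ^ p := pow_le_pow_left₀ (by positivity) ht p
  have h2 : (2*t : ℝ) = (2/ε) * (ε*t) := by field_simp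
  have h3 : (ε*t) ^ p ≤ (p.factorial : ℝ) * Real.exp (ε*t) := pow_le_exp_aux p (by positivity)
  have h4 : (0:ℝ) ≤ (2/ε) ^ p := by positivity
  calc (B⁻¹) ^ m ≤ (2*t) ^ p := h1
    _ = (2/ε) ^ p * (ε*t) ^ p := by rw [h2, mul_pow]
    _ ≤ (2/ε) ^ p * ((p.factorial : ℝ) * Real.exp (ε*t)) := by
        exact mul_le_mul_of_nonneg_left h3 h4
    _ = ((p.factorial : ℝ) * (2/ε) ^ p) * Real.exp (ε*t) := by ring
    _ ≤ max 1 ((p.factorial : ℝ) * (2/ε) ^ p) * Real.exp (ε*t) := by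
        exact mul_le_mul_of_nonneg_right (le_max_right _ _) (Real.exp_pos _).le

private lemma dbl_iter_aux (μ : ℝ → ℝ) (B : ℝ) (hB : 0 < B)
    (hdbl : ∀ d ∈ Set.Ioo (0:ℝ) 1, B * μ (1 - d) ≤ μ (1 - d/2)) :
    ∀ d ∈ Set.Ioo (0:ℝ) 1, ∀ m : ℕ, B ^ m * μ (1 - d) ≤ μ (1 - d / 2 ^ m) := by
  intro d hd m
  induction m with
  | zero => simp
  | succ m ih =>
      have h2m : (1:ℝ) ≤ 2 ^ m := one_le_pow₀ (by norm_num)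
      have hd2 : d / 2 ^ m ∈ Set.Ioo (0:ℝ) 1 := by
        constructor
        · have := hd.1; positivity
        · exact lt_of_le_of_lt (div_le_self hd.1.le h2m) hd.2
      have step := hdbl _ hd2
      have heq : d / 2 ^ m / 2 = d / 2 ^ (m+1) := by
        rw [pow_succ]; ring
      rw [heq] at step
      calc B ^ (m+1) * μ (1 - d) = B * (B ^ m * μ (1 - d)) := by ring
        _ ≤ B * μ (1 - d / 2 ^ m) := mul_le_mul_of_nonneg_left ih hB.le
        _ ≤ μ (1 - d / 2 ^ (m+1)) := step

private lemma grow_chain_aux (μ : ℝ → ℝ) (hμ_anti : StrictAntiOn μ (Set.Ico (0:ℝ) 1))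
    (lam A y₀ : ℝ) (hlam : 1 < lam) (hA : 0 < A) (hy₀ : 1 ≤ y₀)
    (Hg : ∀ x y : ℝ, y₀ < y → lam * y < x → A * μ (1 - 1/x) < μ (1 - 1/y)) :
    ∀ (j : ℕ) (y x : ℝ), y₀ < y → (lam^2) ^ j * y ≤ x →
      A ^ j * μ (1 - 1/x) ≤ μ (1 - 1/y) := by
  intro j
  induction j with
  | zero =>
      intro y x hy hx
      have hy1 : 1 < y := lt_of_le_of_lt hy₀ hy
      have hyx : y ≤ x := by simpa using hx
      have hmono := hμ_anti.antitoneOn (mem_Ico_aux hy1.le) (mem_Ico_aux (hy1.le.trans hyx))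
        (by
          have : 1/x ≤ 1/y := one_div_le_one_div_of_le (by linarith) hyx
          linarith)
      simpa using hmono
  | succ j ih =>
      intro y x hy hx
      have hy0 : 0 < y := by linarith [lt_of_le_of_lt hy₀ hy]
      have hlam2 : 1 < lam ^ 2 := by nlinarith
      have hy' : y₀ < lam ^ 2 * y := lt_of_lt_of_le hy (by nlinarith)
      have hgy : lam * y < lam ^ 2 * y := by nlinarith
      have h1 : A * μ (1 - 1/(lam ^ 2 * y)) < μ (1 - 1/y) := Hg _ y hy hgy
      have h2 : A ^ j * μ (1 - 1/x) ≤ μ (1 - 1/(lam ^ 2 * y)) := by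
        apply ih _ _ hy'
        calc (lam^2) ^ j * (lam^2 * y) = (lam^2) ^ (j+1) * y := by ring
          _ ≤ x := hx
      calc A ^ (j+1) * μ (1 - 1/x) = A * (A ^ j * μ (1 - 1/x)) := by ring
        _ ≤ A * μ (1 - 1/(lam ^ 2 * y)) := mul_le_mul_of_nonneg_left h2 hA.le
        _ ≤ μ (1 - 1/y) := h1.le

set_option maxHeartbeats 1000000 in
theorem stmt_7
    (μ : ℝ → ℝ)
    (hμ_pos : ∀ r ∈ Set.Ico (0:ℝ) 1, 0 < μ r)
    (hμ_anti : StrictAntiOn μ (Set.Ico (0:ℝ) 1))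
    (hμ_cont : ContinuousOn μ (Set.Ico (0:ℝ) 1))
    (hμ_lim : Filter.Tendsto μ (nhdsWithin 1 (Set.Iio (1:ℝ))) (nhds 0))
    (B : ℝ) (hB : 0 < B)
    (hdbl : ∀ d ∈ Set.Ioo (0:ℝ) 1, B * μ (1 - d) ≤ μ (1 - d/2))
    (hgrow : ∀ q : ℝ, 1 < q → ∃ A : ℝ, 1 < A ∧ ∃ y₀ : ℝ, 1 ≤ y₀ ∧
      ∀ x y : ℝ, y₀ < y → q * y < x → A * μ (1 - 1/x) < μ (1 - 1/y))
    (lam : ℝ) (hlam : 1 < lam)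
    (n : ℕ → ℕ) (hn : ∀ k, 0 < n k)
    (hgap : ∀ k, lam * (n k : ℝ) ≤ (n (k+1) : ℝ))
    (a : ℕ → ℂ)
    (f : ℂ → ℂ)
    (hf_diff : DifferentiableOn ℂ f (Metric.ball (0:ℂ) 1))
    (hconv : ∀ z ∈ Metric.ball (0:ℂ) 1, Summable (fun k : ℕ => a k * z ^ (n k)))
    (hf : ∀ z ∈ Metric.ball (0:ℂ) 1, f z = ∑' k : ℕ, a k * z ^ (n k))
    (C : ℝ)
    (hcoef : ∀ k : ℕ, (n k : ℝ) * ‖a k‖ * μ (1 - 1/(n k : ℝ)) ≤ C) :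
    ∃ M : ℝ, ∀ z ∈ Metric.ball (0:ℂ) 1,
      μ (‖z‖) * ‖deriv f z‖ ≤ M := by
  classical
  -- ## basic facts
  have habs : ∀ k, 0 ≤ ‖a k‖ := fun k => norm_nonneg _
  have hn1 : ∀ k, (1:ℝ) ≤ (n k : ℝ) := fun k => by exact_mod_cast hn k
  have hμn : ∀ k, 0 < μ (1 - 1/(n k : ℝ)) := fun k => hμ_pos _ (mem_Ico_aux (hn1 k))
  have hμhalf : 0 < μ (1/2) := hμ_pos _ (by norm_num)
  have hμ0 : 0 < μ 0 := hμ_pos _ (by norm_num)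
  have hC0 : 0 ≤ C :=
    le_trans (mul_nonneg (mul_nonneg (by positivity) (habs 0)) (hμn 0).le) (hcoef 0)
  have hA2 : ∀ k, (n k : ℝ) * ‖a k‖ ≤ C / μ (1 - 1/(n k : ℝ)) :=
    fun k => (le_div_iff₀ (hμn k)).mpr (hcoef k)
  -- strict monotonicity of n
  have hnmono : StrictMono n := by
    apply strictMono_nat_of_lt_succ
    intro k
    have h1 := hgap k
    have h2 : (0:ℝ) < (n k : ℝ) := by exact_mod_cast hn k
    have : (n k : ℝ) < (n (k+1) : ℝ) := lt_of_lt_of_le (by nlinarith) h1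
    exact_mod_cast this
  have hnk1 : ∀ k, k + 1 ≤ n k := by
    intro k
    induction k with
    | zero => exact hn 0
    | succ k ih =>
        have h := hnmono (show k < k + 1 by omega)
        omega
  have hgapiter : ∀ k m : ℕ, lam ^ m * (n k : ℝ) ≤ (n (k + m) : ℝ) := by
    intro k m
    induction m with
    | zero => simp
    | succ m ih =>
        have h1 := hgap (k + m)
        have hnn : (0:ℝ) ≤ (n k : ℝ) := by positivity
        calc lam ^ (m+1) * (n k : ℝ) = lam * (lam ^ m * (n k : ℝ)) := by ring
          _ ≤ lam * (n (k + m) : ℝ) := mul_le_mul_of_nonneg_left ih (by linarith)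
          _ ≤ (n (k + m + 1) : ℝ) := h1
  -- B < 1
  have hB1 : B < 1 := by
    have h34 := hμ_anti (show (1/2:ℝ) ∈ Set.Ico (0:ℝ) 1 by norm_num)
      (show (3/4:ℝ) ∈ Set.Ico (0:ℝ) 1 by norm_num) (by norm_num)
    have hd := hdbl (1/2) (by norm_num)
    have hhalf := hμhalf
    norm_num at hd h34 ⊢
    nlinarith
  -- growth data
  obtain ⟨A, hA1, y₀, hy₀1, Hg⟩ := hgrow lam hlam
  have hA0 : 0 < A := by linarith
  set s : ℝ := Real.sqrt A⁻¹ with hs_def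
  have hs0 : 0 < s := Real.sqrt_pos.mpr (by positivity)
  have hs1 : s < 1 := by
    rw [hs_def, show (1:ℝ) = Real.sqrt 1 from (Real.sqrt_one).symm]
    exact Real.sqrt_lt_sqrt (by positivity) (by rw [inv_lt_one_iff₀]; right; exact hA1)
  have hs2 : s * s = A⁻¹ := Real.mul_self_sqrt (by positivity)
  set k₀ : ℕ := ⌈y₀⌉₊ with hk₀_def
  have hk₀ : ∀ k, k₀ ≤ k → y₀ < (n k : ℝ) := by
    intro k hk
    have h1 : (k₀ : ℝ) ≥ y₀ := Nat.le_ceil y₀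
    have h2 : k + 1 ≤ n k := hnk1 k
    have : (k₀:ℝ) + 1 ≤ (n k : ℝ) := by exact_mod_cast le_trans (by omega) h2
    linarith
  obtain ⟨D, hD1, hD⟩ := L1_aux B hB (1/4) (by norm_num)
  set σ : ℝ := Real.exp (1/4) / 2 with hσ_def
  have hσ0 : 0 ≤ σ := by positivity
  have hσ1 : σ < 1 := by
    have h4 : Real.exp (1/4) ^ 4 = Real.exp 1 := by
      rw [← Real.exp_nat_mul]; norm_num
    have he : Real.exp (1/4) < 2 := by
      apply lt_of_pow_lt_pow_left₀ 4 (by norm_num : (0:ℝ) ≤ 2)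
      rw [h4]
      calc Real.exp 1 < 2.7182818286 := Real.exp_one_lt_d9
        _ ≤ 2 ^ 4 := by norm_num
    rw [hσ_def]; linarith
  set ρ : ℝ := Real.exp (-(lam - 1)/2) with hρ_def
  have hρ0 : 0 ≤ ρ := (Real.exp_pos _).le
  have hρ1 : ρ < 1 := by
    rw [hρ_def, Real.exp_lt_one_iff]
    linarith
  set E1 : ℝ := 2 * μ 0 * (C / μ (1/2)) * D with hE1_def
  have hE1_0 : 0 ≤ E1 := by positivity
  set M : ℝ := E1 * (1 - σ)⁻¹ + (C * k₀ + C * s⁻¹ * (1 - s)⁻¹ + 2 * C * D * (1 - ρ)⁻¹)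
    with hM_def
  -- clog bound
  have hclog : ∀ N : ℕ, 1 ≤ N → (2:ℝ) ^ (Nat.clog 2 N) ≤ 2 * (N : ℝ) := by
    intro N hN
    rcases eq_or_lt_of_le hN with h | h
    · rw [← h]; norm_num [Nat.clog_one_right]
    · have h1 : 2 ^ (Nat.clog 2 N - 1) < N := Nat.pow_pred_clog_lt_self one_lt_two h
      have h2 : 0 < Nat.clog 2 N := Nat.clog_pos one_lt_two h
      have h3 : 2 ^ Nat.clog 2 N ≤ 2 * N := by
        have : 2 ^ Nat.clog 2 N = 2 * 2 ^ (Nat.clog 2 N - 1) := by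
          rw [← pow_succ']
          congr 1
          omega
        omega
      exact_mod_cast h3
  -- the key coefficient bound
  have bound1 : ∀ k, C / μ (1 - 1/(n k : ℝ)) ≤
      (C / μ (1/2)) * (B⁻¹) ^ (Nat.clog 2 (n k)) := by
    intro k
    set m := Nat.clog 2 (n k) with hm_def
    have hdb := dbl_iter_aux μ B hB hdbl (1/2) (by norm_num) m
    have heq : (1/2 : ℝ) / 2 ^ m = 1 / 2 ^ (m+1) := by
      rw [pow_succ]; ring
    rw [heq] at hdb
    rw [show (1 - 1/2 : ℝ) = 1/2 by norm_num] at hdb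
    have hle : 1 - 1/(n k : ℝ) ≤ 1 - 1 / 2 ^ (m+1) := by
      have h1 : (n k : ℝ) ≤ 2 ^ (m+1) := by
        have := Nat.le_pow_clog one_lt_two (n k)
        have h2 : ((n k : ℕ) : ℝ) ≤ (2:ℝ) ^ m := by exact_mod_cast this
        calc (n k : ℝ) ≤ (2:ℝ) ^ m := h2
          _ ≤ (2:ℝ) ^ (m+1) := by
              apply pow_le_pow_right₀ (by norm_num) (Nat.le_succ m)
      have h0 : (0:ℝ) < (n k : ℝ) := by exact_mod_cast hn k
      have := one_div_le_one_div_of_le h0 h1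
      linarith
    have hmem1 : 1 - 1/(n k : ℝ) ∈ Set.Ico (0:ℝ) 1 := mem_Ico_aux (hn1 k)
    have hmem2 : 1 - 1/(2:ℝ) ^ (m+1) ∈ Set.Ico (0:ℝ) 1 := mem_Ico_aux (one_le_pow₀ (by norm_num))
    have hmono := hμ_anti.antitoneOn hmem1 hmem2 hle
    -- hmono : μ (1 - 1/2^(m+1)) ≤ μ (1 - 1/(n k))
    have hBm : 0 < B ^ m * μ (1/2) := by positivity
    have hlower : B ^ m * μ (1/2) ≤ μ (1 - 1/(n k : ℝ)) := le_trans hdb hmono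
    calc C / μ (1 - 1/(n k : ℝ)) ≤ C / (B ^ m * μ (1/2)) :=
          div_le_div_of_nonneg_left hC0 hBm hlower
      _ = (C / μ (1/2)) * (B⁻¹) ^ m := by
          rw [inv_pow, mul_comm (B ^ m) (μ (1/2)), div_mul_eq_div_div, div_eq_mul_inv]
  -- summability at each radius
  have hsum : ∀ r : ℝ, 0 ≤ r → r < 1 →
      Summable (fun k => (n k : ℝ) * ‖a k‖ * r ^ (n k - 1)) := by
    intro r hr0 hr1
    obtain ⟨D', hD'1, hD'⟩ := L1_aux B hB ((1-r)/2) (by linarith)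
    set τ : ℝ := Real.exp ((1-r)/2) * r with hτ_def
    have hτ0 : 0 ≤ τ := by positivity
    have hτ1 : τ < 1 := by
      have h1 : r ≤ Real.exp (r - 1) := by
        have := Real.add_one_le_exp (r - 1); linarith
      have h2 : τ ≤ Real.exp ((1-r)/2) * Real.exp (r-1) :=
        mul_le_mul_of_nonneg_left h1 (Real.exp_pos _).le
      rw [← Real.exp_add] at h2
      have h3 : Real.exp ((1-r)/2 + (r-1)) < 1 := by
        rw [Real.exp_lt_one_iff]; linarith
      linarith
    apply Summable.of_nonneg_of_le (fun k => by positivity) (fun k => ?_)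
      ((summable_geometric_of_lt_one hτ0 hτ1).mul_left ((C / μ (1/2)) * D' * Real.exp ((1-r)/2)))
    ·
      have hb1 : (n k : ℝ) * ‖a k‖ ≤ (C / μ (1/2)) * (B⁻¹) ^ (Nat.clog 2 (n k)) :=
        le_trans (hA2 k) (bound1 k)
      have hb2 : (B⁻¹) ^ (Nat.clog 2 (n k)) ≤ D' * Real.exp ((1-r)/2 * (n k : ℝ)) :=
        hD' _ _ (hclog (n k) (hn k))
      have hexp : Real.exp ((1-r)/2 * (n k : ℝ)) * r ^ (n k - 1)
          = Real.exp ((1-r)/2) * τ ^ (n k - 1) := by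
        have h5 : ((n k - 1 : ℕ) : ℝ) = (n k : ℝ) - 1 := by
          rw [Nat.cast_sub (hn k)]; norm_num
        have h6 : (1-r)/2 * (n k : ℝ) = (1-r)/2 + ((n k - 1 : ℕ) : ℝ) * ((1-r)/2) := by
          rw [h5]; ring
        rw [h6, Real.exp_add, hτ_def, mul_pow, ← Real.exp_nat_mul]
        ring
      have hτk : τ ^ (n k - 1) ≤ τ ^ k := by
        apply pow_le_pow_of_le_one hτ0 hτ1.le
        have := hnk1 k; omega
      calc (n k : ℝ) * ‖a k‖ * r ^ (n k - 1)
          ≤ ((C / μ (1/2)) * (B⁻¹) ^ (Nat.clog 2 (n k))) * r ^ (n k - 1) := by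
            apply mul_le_mul_of_nonneg_right hb1 (by positivity)
        _ ≤ ((C / μ (1/2)) * (D' * Real.exp ((1-r)/2 * (n k : ℝ)))) * r ^ (n k - 1) := by
            apply mul_le_mul_of_nonneg_right _ (by positivity)
            apply mul_le_mul_of_nonneg_left hb2 (by positivity)
        _ = ((C / μ (1/2)) * D') * (Real.exp ((1-r)/2 * (n k : ℝ)) * r ^ (n k - 1)) := by ring
        _ = ((C / μ (1/2)) * D' * Real.exp ((1-r)/2)) * τ ^ (n k - 1) := by
            rw [hexp]; ring
        _ ≤ ((C / μ (1/2)) * D' * Real.exp ((1-r)/2)) * τ ^ k := by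
            apply mul_le_mul_of_nonneg_left hτk (by positivity)
  -- ## the key uniform estimate on finite sums
  have hkey : ∀ r : ℝ, 0 ≤ r → r < 1 → ∀ F : Finset ℕ,
      μ r * ∑ k ∈ F, (n k : ℝ) * ‖a k‖ * r ^ (n k - 1) ≤ M := by
    intro r hr0 hr1 F
    have hμr : 0 < μ r := hμ_pos r ⟨hr0, hr1⟩
    have hg0 : ∀ k, 0 ≤ (n k : ℝ) * ‖a k‖ * r ^ (n k - 1) := fun k =>
      mul_nonneg (mul_nonneg (by positivity) (habs k)) (pow_nonneg hr0 _)
    have hMs : 0 ≤ E1 * (1 - σ)⁻¹ := mul_nonneg hE1_0 (by rw [inv_nonneg]; linarith)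
    have hMl : 0 ≤ C * k₀ + C * s⁻¹ * (1 - s)⁻¹ := by
      have h1 : 0 ≤ C * s⁻¹ * (1 - s)⁻¹ :=
        mul_nonneg (mul_nonneg hC0 (by positivity)) (by rw [inv_nonneg]; linarith)
      positivity
    have hMh : 0 ≤ 2 * C * D * (1 - ρ)⁻¹ :=
      mul_nonneg (by positivity) (by rw [inv_nonneg]; linarith)
    rcases le_or_gt r (1/2) with hsmall | hbig
    · -- ## small radius case
      have hμr0 : μ r ≤ μ 0 :=
        hμ_anti.antitoneOn ⟨le_refl 0, one_pos⟩ ⟨hr0, hr1⟩ hr0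
      set c6 : ℝ := 2 * (C / μ (1/2)) * D with hc6_def
      have hc6 : 0 ≤ c6 := by positivity
      have hterm : ∀ k ∈ F, (n k : ℝ) * ‖a k‖ * r ^ (n k - 1) ≤ c6 * σ ^ (n k) := by
        intro k _
        have hb1 : (n k : ℝ) * ‖a k‖ ≤ (C / μ (1/2)) * (B⁻¹) ^ (Nat.clog 2 (n k)) :=
          le_trans (hA2 k) (bound1 k)
        have hb2 : (B⁻¹) ^ (Nat.clog 2 (n k)) ≤ D * Real.exp (1/4 * (n k : ℝ)) :=
          hD _ _ (hclog (n k) (hn k))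
        have hrh : r ^ (n k - 1) ≤ (1/2 : ℝ) ^ (n k - 1) :=
          pow_le_pow_left₀ hr0 hsmall _
        have hhalf : (1/2 : ℝ) ^ (n k - 1) = 2 * (1/2 : ℝ) ^ (n k) := by
          have h7 : (1/2 : ℝ) ^ (n k) = (1/2 : ℝ) ^ (n k - 1) * (1/2) := by
            rw [← pow_succ]
            congr 1
            have := hn k; omega
          rw [h7]; ring
        have hσn : Real.exp (1/4 * (n k : ℝ)) * (1/2 : ℝ) ^ (n k) = σ ^ (n k) := by
          calc Real.exp (1/4 * (n k : ℝ)) * (1/2 : ℝ) ^ (n k)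
              = Real.exp (1/4) ^ (n k) * (1/2 : ℝ) ^ (n k) := by
                rw [mul_comm (1/4 : ℝ), Real.exp_nat_mul]
            _ = (Real.exp (1/4) * (1/2)) ^ (n k) := (mul_pow _ _ _).symm
            _ = σ ^ (n k) := by rw [hσ_def]; congr 1; ring
        calc (n k : ℝ) * ‖a k‖ * r ^ (n k - 1)
            ≤ ((C / μ (1/2)) * (B⁻¹) ^ (Nat.clog 2 (n k))) * r ^ (n k - 1) :=
              mul_le_mul_of_nonneg_right hb1 (pow_nonneg hr0 _)
          _ ≤ ((C / μ (1/2)) * (B⁻¹) ^ (Nat.clog 2 (n k))) * (1/2 : ℝ) ^ (n k - 1) :=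
              mul_le_mul_of_nonneg_left hrh (by positivity)
          _ ≤ ((C / μ (1/2)) * (D * Real.exp (1/4 * (n k : ℝ)))) * (1/2 : ℝ) ^ (n k - 1) :=
              mul_le_mul_of_nonneg_right
                (mul_le_mul_of_nonneg_left hb2 (by positivity)) (by positivity)
          _ = c6 * (Real.exp (1/4 * (n k : ℝ)) * (1/2 : ℝ) ^ (n k)) := by
              rw [hhalf, hc6_def]; ring
          _ = c6 * σ ^ (n k) := by rw [hσn]
      have hsum2 : ∑ k ∈ F, (n k : ℝ) * ‖a k‖ * r ^ (n k - 1)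
          ≤ c6 * (1 - σ)⁻¹ := by
        calc ∑ k ∈ F, (n k : ℝ) * ‖a k‖ * r ^ (n k - 1)
            ≤ ∑ k ∈ F, c6 * σ ^ (n k) := Finset.sum_le_sum hterm
          _ = c6 * ∑ k ∈ F, σ ^ (n k) := by rw [Finset.mul_sum]
          _ ≤ c6 * (1 - σ)⁻¹ := by
              apply mul_le_mul_of_nonneg_left _ hc6
              exact geo_sum_inj_aux σ hσ0 hσ1 F n (fun k _ l _ h => hnmono.injective h)
      have hfin : μ r * ∑ k ∈ F, (n k : ℝ) * ‖a k‖ * r ^ (n k - 1)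
          ≤ E1 * (1 - σ)⁻¹ := by
        have hsumnn : 0 ≤ ∑ k ∈ F, (n k : ℝ) * ‖a k‖ * r ^ (n k - 1) :=
          Finset.sum_nonneg (fun k _ => hg0 k)
        have hinvσ : 0 ≤ (1 - σ)⁻¹ := by rw [inv_nonneg]; linarith
        calc μ r * ∑ k ∈ F, (n k : ℝ) * ‖a k‖ * r ^ (n k - 1)
            ≤ μ 0 * ∑ k ∈ F, (n k : ℝ) * ‖a k‖ * r ^ (n k - 1) :=
              mul_le_mul_of_nonneg_right hμr0 hsumnn
          _ ≤ μ 0 * (c6 * (1 - σ)⁻¹) := mul_le_mul_of_nonneg_left hsum2 hμ0.le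
          _ = E1 * (1 - σ)⁻¹ := by rw [hE1_def, hc6_def]; ring
      rw [hM_def]; linarith
    · -- ## main case : 1/2 < r < 1
      have h1r : 0 < 1 - r := by linarith
      set N : ℝ := 1/(1-r) with hN_def
      have hNpos : 0 < N := by positivity
      have hN1 : 1 - 1/N = r := by rw [hN_def]; field_simp; ring
      have hNr : N * (1 - r) = 1 := by rw [hN_def]; field_simp
      set P : ℕ → Prop := fun k => (n k : ℝ) ≤ N with hP_def
      have hsplit := Finset.sum_filter_add_sum_filter_not F P
        (fun k => (n k : ℝ) * ‖a k‖ * r ^ (n k - 1))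
      set Flow := F.filter P with hFlow_def
      set Fhigh := F.filter (fun k => ¬ P k) with hFhigh_def
      -- ### low part
      have hlow : μ r * ∑ k ∈ Flow, (n k : ℝ) * ‖a k‖ * r ^ (n k - 1)
          ≤ C * k₀ + C * s⁻¹ * (1 - s)⁻¹ := by
        rcases Flow.eq_empty_or_nonempty with he | hne
        · rw [he]; simpa using hMl
        · set K := Flow.max' hne with hK_def
          have hKmem : K ∈ Flow := Flow.max'_mem hne
          have hKle : (n K : ℝ) ≤ N := (Finset.mem_filter.mp hKmem).2
          have hterm : ∀ k ∈ Flow,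
              μ r * ((n k : ℝ) * ‖a k‖ * r ^ (n k - 1))
              ≤ (if k < k₀ then C else 0) + C * s⁻¹ * s ^ (K - k) := by
            intro k hk
            obtain ⟨hkF, hkN⟩ := Finset.mem_filter.mp hk
            have hkK : k ≤ K := Finset.le_max' _ _ hk
            have hnkpos : (0:ℝ) < (n k : ℝ) := by exact_mod_cast hn k
            have hr_arg : 1 - 1/(n k : ℝ) ≤ r := by
              have h9 : 1/N ≤ 1/(n k : ℝ) := one_div_le_one_div_of_le hnkpos hkN
              have h10 : (1:ℝ) - r = 1/N := by rw [hN_def]; field_simp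
              linarith
            have hμcmp : μ r ≤ μ (1 - 1/(n k : ℝ)) :=
              hμ_anti.antitoneOn (mem_Ico_aux (hn1 k)) ⟨hr0, hr1⟩ hr_arg
            have hbase : μ r * ((n k : ℝ) * ‖a k‖ * r ^ (n k - 1))
                ≤ μ r * (C / μ (1 - 1/(n k : ℝ))) := by
              apply mul_le_mul_of_nonneg_left _ hμr.le
              calc (n k : ℝ) * ‖a k‖ * r ^ (n k - 1)
                  ≤ (C / μ (1 - 1/(n k : ℝ))) * r ^ (n k - 1) :=
                    mul_le_mul_of_nonneg_right (hA2 k) (pow_nonneg hr0 _)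
                _ ≤ (C / μ (1 - 1/(n k : ℝ))) * 1 := by
                    apply mul_le_mul_of_nonneg_left (pow_le_one₀ hr0 hr1.le)
                      (div_nonneg hC0 (hμn k).le)
                _ = C / μ (1 - 1/(n k : ℝ)) := mul_one _
            rcases lt_or_ge k k₀ with hk₀' | hk₀'
            · have h11 : μ r * (C / μ (1 - 1/(n k : ℝ))) ≤ C := by
                have h12 := mul_le_mul_of_nonneg_right hμcmp
                  (div_nonneg hC0 (hμn k).le)
                have h13 : μ (1 - 1/(n k : ℝ)) * (C / μ (1 - 1/(n k : ℝ))) = C := by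
                  rw [mul_comm, div_mul_cancel₀ _ (ne_of_gt (hμn k))]
                linarith
              have h14 : (0:ℝ) ≤ C * s⁻¹ * s ^ (K - k) :=
                mul_nonneg (mul_nonneg hC0 (by positivity)) (pow_nonneg hs0.le _)
              simp only [if_pos hk₀']
              linarith
            · have hy : y₀ < (n k : ℝ) := hk₀ k hk₀'
              have hx : (lam^2) ^ ((K - k)/2) * (n k : ℝ) ≤ N := by
                calc (lam^2) ^ ((K - k)/2) * (n k : ℝ)
                    = lam ^ (2 * ((K - k)/2)) * (n k : ℝ) := by rw [pow_mul]
                  _ ≤ lam ^ (K - k) * (n k : ℝ) := by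
                      apply mul_le_mul_of_nonneg_right _ hnkpos.le
                      apply pow_le_pow_right₀ hlam.le
                      omega
                  _ ≤ (n (k + (K - k)) : ℝ) := hgapiter k (K - k)
                  _ = (n K : ℝ) := by congr 2; omega
                  _ ≤ N := hKle
              have hchain := grow_chain_aux μ hμ_anti lam A y₀ hlam hA0 hy₀1 Hg
                ((K - k)/2) (n k : ℝ) N hy hx
              rw [hN1] at hchain
              have hAj : (0:ℝ) < A ^ ((K - k)/2) := by positivity
              have h12 : μ r ≤ (A ^ ((K - k)/2))⁻¹ * μ (1 - 1/(n k : ℝ)) := by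
                rw [inv_mul_eq_div, le_div_iff₀ hAj]
                linarith [hchain]
              have h11 : μ r * (C / μ (1 - 1/(n k : ℝ))) ≤ C * (A⁻¹) ^ ((K - k)/2) := by
                calc μ r * (C / μ (1 - 1/(n k : ℝ)))
                    ≤ ((A ^ ((K - k)/2))⁻¹ * μ (1 - 1/(n k : ℝ))) * (C / μ (1 - 1/(n k : ℝ))) :=
                      mul_le_mul_of_nonneg_right h12 (div_nonneg hC0 (hμn k).le)
                  _ = (A ^ ((K - k)/2))⁻¹ * (μ (1 - 1/(n k : ℝ)) * (C / μ (1 - 1/(n k : ℝ)))) := by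
                      ring
                  _ = C * (A ^ ((K - k)/2))⁻¹ := by
                      rw [mul_comm (μ (1 - 1/(n k : ℝ))) (C / μ (1 - 1/(n k : ℝ))),
                        div_mul_cancel₀ _ (ne_of_gt (hμn k))]
                      ring
                  _ = C * (A⁻¹) ^ ((K - k)/2) := by rw [inv_pow]
              have h13 : (A⁻¹) ^ ((K - k)/2) ≤ s⁻¹ * s ^ (K - k) := by
                have hss : (A⁻¹) ^ ((K - k)/2) = s ^ (2 * ((K - k)/2)) := by
                  rw [pow_mul]
                  congr 1
                  rw [sq, hs2]
                have h14 : s ^ (2 * ((K - k)/2)) ≤ s ^ ((K - k) - 1) :=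
                  pow_le_pow_of_le_one hs0.le hs1.le (by omega)
                have h15 : s ^ ((K - k) - 1) ≤ s⁻¹ * s ^ (K - k) := by
                  rcases Nat.eq_zero_or_pos (K - k) with h | h
                  · rw [h]
                    simp only [Nat.zero_sub, pow_zero, mul_one]
                    exact (one_le_inv₀ hs0).2 hs1.le
                  · obtain ⟨e, he⟩ : ∃ e, K - k = e + 1 := ⟨K - k - 1, by omega⟩
                    apply le_of_eq
                    rw [he, Nat.add_sub_cancel, pow_succ, mul_comm (s ^ e) s, ← mul_assoc,
                      inv_mul_cancel₀ (ne_of_gt hs0), one_mul]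
                rw [hss]
                exact le_trans h14 h15
              have h16 : C * (A⁻¹) ^ ((K - k)/2) ≤ C * (s⁻¹ * s ^ (K - k)) :=
                mul_le_mul_of_nonneg_left h13 hC0
              simp only [if_neg (not_lt.mpr hk₀')]
              have h17 : C * (s⁻¹ * s ^ (K - k)) = C * s⁻¹ * s ^ (K - k) := by ring
              linarith
          calc μ r * ∑ k ∈ Flow, (n k : ℝ) * ‖a k‖ * r ^ (n k - 1)
              = ∑ k ∈ Flow, μ r * ((n k : ℝ) * ‖a k‖ * r ^ (n k - 1)) := by
                rw [Finset.mul_sum]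
            _ ≤ ∑ k ∈ Flow, ((if k < k₀ then C else 0) + C * s⁻¹ * s ^ (K - k)) :=
                Finset.sum_le_sum hterm
            _ = (∑ k ∈ Flow, (if k < k₀ then C else 0))
                + ∑ k ∈ Flow, C * s⁻¹ * s ^ (K - k) := Finset.sum_add_distrib
            _ ≤ C * k₀ + C * s⁻¹ * (1 - s)⁻¹ := by
                have ha1 : (∑ k ∈ Flow, (if k < k₀ then C else 0)) ≤ C * k₀ := by
                  rw [← Finset.sum_filter]
                  rw [Finset.sum_const, nsmul_eq_mul]
                  have hcard : (Flow.filter (fun k => k < k₀)).card ≤ k₀ := by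
                    have hsub : Flow.filter (fun k => k < k₀) ⊆ Finset.range k₀ := by
                      intro kk hkk
                      rw [Finset.mem_range]
                      exact (Finset.mem_filter.mp hkk).2
                    calc (Flow.filter (fun k => k < k₀)).card
                        ≤ (Finset.range k₀).card := Finset.card_le_card hsub
                      _ = k₀ := Finset.card_range k₀
                  rw [mul_comm]
                  exact mul_le_mul_of_nonneg_left (by exact_mod_cast hcard) hC0
                have ha2 : ∑ k ∈ Flow, C * s⁻¹ * s ^ (K - k) ≤ C * s⁻¹ * (1 - s)⁻¹ := by
                  rw [← Finset.mul_sum]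
                  apply mul_le_mul_of_nonneg_left _ (mul_nonneg hC0 (by positivity))
                  apply geo_sum_inj_aux s hs0.le hs1 Flow (fun k => K - k)
                  intro k hk l hl hkl
                  have h1 : k ≤ K := Finset.le_max' _ _ hk
                  have h2 : l ≤ K := Finset.le_max' _ _ hl
                  omega
                linarith
      -- ### high part
      have hhigh : μ r * ∑ k ∈ Fhigh, (n k : ℝ) * ‖a k‖ * r ^ (n k - 1)
          ≤ 2 * C * D * (1 - ρ)⁻¹ := by
        rcases Fhigh.eq_empty_or_nonempty with he | hne
        · rw [he]; simpa using hMh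
        · set K' := Fhigh.min' hne with hK'_def
          have hK'mem : K' ∈ Fhigh := Fhigh.min'_mem hne
          have hK'N : N < (n K' : ℝ) := by
            have := (Finset.mem_filter.mp hK'mem).2
            rw [hP_def] at this
            exact lt_of_not_ge this
          have hterm : ∀ k ∈ Fhigh,
              μ r * ((n k : ℝ) * ‖a k‖ * r ^ (n k - 1))
              ≤ (2 * C * D) * ρ ^ (k - K') := by
            intro k hk
            obtain ⟨hkF, hkN⟩ := Finset.mem_filter.mp hk
            rw [hP_def] at hkN
            have hNk : N < (n k : ℝ) := lt_of_not_ge hkN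
            have hnkpos : (0:ℝ) < (n k : ℝ) := by exact_mod_cast hn k
            set x : ℝ := (n k : ℝ) * (1 - r) with hx_def
            have hx0 : 0 < x := by positivity
            have hx1 : 1 < x := by
              calc (1:ℝ) = N * (1 - r) := hNr.symm
                _ < (n k : ℝ) * (1 - r) := by
                    exact mul_lt_mul_of_pos_right hNk h1r
            set m := Nat.clog 2 ⌈x⌉₊ with hm_def
            have hceil2 : 1 < ⌈x⌉₊ := by
              rw [Nat.lt_ceil]
              exact_mod_cast hx1
            have hup : x ≤ (2:ℝ) ^ m := by
              have hc1 : (⌈x⌉₊ : ℝ) ≤ (2:ℝ) ^ m := by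
                exact_mod_cast Nat.le_pow_clog one_lt_two ⌈x⌉₊
              exact le_trans (Nat.le_ceil x) hc1
            have hlow2 : (2:ℝ) ^ m ≤ 2 * x := by
              have hc1 : 2 ^ (m - 1) < ⌈x⌉₊ := Nat.pow_pred_clog_lt_self one_lt_two hceil2
              have hc2 : (2:ℝ) ^ (m - 1) ≤ (⌈x⌉₊ : ℝ) - 1 := by
                have hnat : (2:ℕ) ^ (m - 1) + 1 ≤ ⌈x⌉₊ := by omega
                have hcast : (((2:ℕ) ^ (m - 1) + 1 : ℕ) : ℝ) ≤ (⌈x⌉₊ : ℝ) := by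
                  exact_mod_cast hnat
                push_cast at hcast
                linarith
              have hc3 : (⌈x⌉₊ : ℝ) - 1 < x := by
                have := Nat.ceil_lt_add_one hx0.le
                linarith
              have hc4 : 0 < m := Nat.clog_pos one_lt_two hceil2
              have hc5 : (2:ℝ) ^ m = 2 * 2 ^ (m - 1) := by
                rw [← pow_succ']
                congr 1
                omega
              rw [hc5]
              linarith
            have hdd := dbl_iter_aux μ B hB hdbl (1 - r) ⟨h1r, by linarith⟩ m
            rw [show (1 - (1 - r) : ℝ) = r by ring] at hdd
            have harg : 1 - 1/(n k : ℝ) ≤ 1 - (1 - r)/2 ^ m := by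
              have h5 : (1 - r)/2 ^ m ≤ 1/(n k : ℝ) := by
                rw [div_le_div_iff₀ (by positivity) hnkpos]
                calc (1 - r) * (n k : ℝ) = x := by rw [hx_def]; ring
                  _ ≤ (2:ℝ) ^ m := hup
                  _ = 1 * (2:ℝ) ^ m := (one_mul _).symm
              linarith
            have hmem2 : 1 - (1 - r)/2 ^ m ∈ Set.Ico (0:ℝ) 1 := by
              constructor
              · have h6 : (1 - r)/2 ^ m ≤ 1 - r := by
                  apply div_le_self h1r.le (one_le_pow₀ (by norm_num))
                linarith
              · have h6 : (0:ℝ) < (1 - r)/2 ^ m := by positivity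
                linarith
            have hμk : B ^ m * μ r ≤ μ (1 - 1/(n k : ℝ)) :=
              le_trans hdd (hμ_anti.antitoneOn (mem_Ico_aux (hn1 k)) hmem2 harg)
            have hBm : (0:ℝ) < B ^ m := by positivity
            have h12 : μ r ≤ (B ^ m)⁻¹ * μ (1 - 1/(n k : ℝ)) := by
              rw [inv_mul_eq_div, le_div_iff₀ hBm]
              linarith [hμk]
            have hμterm : μ r * (C / μ (1 - 1/(n k : ℝ))) ≤ C * (B⁻¹) ^ m := by
              calc μ r * (C / μ (1 - 1/(n k : ℝ)))
                  ≤ ((B ^ m)⁻¹ * μ (1 - 1/(n k : ℝ))) * (C / μ (1 - 1/(n k : ℝ))) :=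
                    mul_le_mul_of_nonneg_right h12 (div_nonneg hC0 (hμn k).le)
                _ = (B ^ m)⁻¹ * (μ (1 - 1/(n k : ℝ)) * (C / μ (1 - 1/(n k : ℝ)))) := by
                    ring
                _ = C * (B ^ m)⁻¹ := by
                    rw [mul_comm (μ (1 - 1/(n k : ℝ))) (C / μ (1 - 1/(n k : ℝ))),
                      div_mul_cancel₀ _ (ne_of_gt (hμn k))]
                    ring
                _ = C * (B⁻¹) ^ m := by rw [inv_pow]
            have hexp1 : r ^ (n k - 1) ≤ 2 * Real.exp (-x) := by
              have he1 : r ≤ Real.exp (r - 1) := by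
                have := Real.add_one_le_exp (r - 1); linarith
              have he2 : r ^ (n k) ≤ Real.exp (r - 1) ^ (n k) :=
                pow_le_pow_left₀ hr0 he1 _
              have he3 : Real.exp (r - 1) ^ (n k) = Real.exp (-x) := by
                rw [← Real.exp_nat_mul]
                congr 1
                rw [hx_def]; ring
              have he4 : r ^ (n k) = r ^ (n k - 1) * r := by
                rw [← pow_succ]
                congr 1
                have := hn k; omega
              have he5 : r ^ (n k - 1) ≤ 2 * r ^ (n k) := by
                have hE : (0:ℝ) ≤ r ^ (n k - 1) := pow_nonneg hr0 _
                have hE2 : (0:ℝ) ≤ r ^ (n k - 1) * (2 * r - 1) :=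
                  mul_nonneg hE (by linarith)
                rw [he4]
                linarith [hE2]
              rw [he3] at he2
              linarith
            have hBD : (B⁻¹) ^ m ≤ D * Real.exp (1/4 * x) := hD m x hlow2
            have hK'k : K' ≤ k := Finset.min'_le _ _ hk
            have hxk : lam ^ (k - K') ≤ x := by
              have hg2 : lam ^ (k - K') * (n K' : ℝ) ≤ (n (K' + (k - K')) : ℝ) :=
                hgapiter K' (k - K')
              have hg3 : K' + (k - K') = k := by omega
              rw [hg3] at hg2
              have hg4 : 1 < (n K' : ℝ) * (1 - r) := by
                calc (1:ℝ) = N * (1 - r) := hNr.symm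
                  _ < (n K' : ℝ) * (1 - r) := mul_lt_mul_of_pos_right hK'N h1r
              have hlampow : (0:ℝ) ≤ lam ^ (k - K') := pow_nonneg (by linarith) _
              calc lam ^ (k - K') = lam ^ (k - K') * 1 := (mul_one _).symm
                _ ≤ lam ^ (k - K') * ((n K' : ℝ) * (1 - r)) :=
                    mul_le_mul_of_nonneg_left hg4.le hlampow
                _ = (lam ^ (k - K') * (n K' : ℝ)) * (1 - r) := by ring
                _ ≤ (n k : ℝ) * (1 - r) := mul_le_mul_of_nonneg_right hg2 h1r.le
            have hρk : Real.exp (-x/2) ≤ ρ ^ (k - K') := by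
              have hp1 : 1 + ((k - K' : ℕ) : ℝ) * (lam - 1) ≤ lam ^ (k - K') := by
                have := one_add_mul_le_pow (by linarith : (-2:ℝ) ≤ lam - 1) (k - K')
                calc 1 + ((k - K' : ℕ) : ℝ) * (lam - 1)
                    = 1 + ((k - K' : ℕ) : ℝ) * (lam - 1) := rfl
                  _ ≤ (1 + (lam - 1)) ^ (k - K') := by
                      have h := this
                      linarith [this]
                  _ = lam ^ (k - K') := by congr 1; ring
              have hp2 : Real.exp (-x/2)
                  ≤ Real.exp (-(((k - K' : ℕ) : ℝ) * (lam - 1))/2) := by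
                apply Real.exp_le_exp.mpr
                linarith [hp1, hxk]
              have hp4 : Real.exp (-(((k - K' : ℕ) : ℝ) * (lam - 1))/2) = ρ ^ (k - K') := by
                rw [hρ_def, ← Real.exp_nat_mul]
                congr 1
                ring
              rw [← hp4]
              exact hp2
            calc μ r * ((n k : ℝ) * ‖a k‖ * r ^ (n k - 1))
                ≤ μ r * ((C / μ (1 - 1/(n k : ℝ))) * r ^ (n k - 1)) := by
                  apply mul_le_mul_of_nonneg_left _ hμr.le
                  exact mul_le_mul_of_nonneg_right (hA2 k) (pow_nonneg hr0 _)
              _ = (μ r * (C / μ (1 - 1/(n k : ℝ)))) * r ^ (n k - 1) := by ring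
              _ ≤ (C * (B⁻¹) ^ m) * r ^ (n k - 1) :=
                  mul_le_mul_of_nonneg_right hμterm (pow_nonneg hr0 _)
              _ ≤ (C * (B⁻¹) ^ m) * (2 * Real.exp (-x)) := by
                  apply mul_le_mul_of_nonneg_left hexp1
                  exact mul_nonneg hC0 (pow_nonneg (by positivity) _)
              _ ≤ (C * (D * Real.exp (1/4 * x))) * (2 * Real.exp (-x)) := by
                  apply mul_le_mul_of_nonneg_right _ (by positivity)
                  exact mul_le_mul_of_nonneg_left hBD hC0
              _ = (2 * C * D) * Real.exp (1/4 * x + -x) := by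
                  rw [Real.exp_add]; ring
              _ ≤ (2 * C * D) * Real.exp (-x/2) := by
                  apply mul_le_mul_of_nonneg_left _ (by positivity)
                  apply Real.exp_le_exp.mpr
                  linarith
              _ ≤ (2 * C * D) * ρ ^ (k - K') := by
                  apply mul_le_mul_of_nonneg_left hρk (by positivity)
          calc μ r * ∑ k ∈ Fhigh, (n k : ℝ) * ‖a k‖ * r ^ (n k - 1)
              = ∑ k ∈ Fhigh, μ r * ((n k : ℝ) * ‖a k‖ * r ^ (n k - 1)) := by
                rw [Finset.mul_sum]
            _ ≤ ∑ k ∈ Fhigh, (2 * C * D) * ρ ^ (k - K') := Finset.sum_le_sum hterm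
            _ = (2 * C * D) * ∑ k ∈ Fhigh, ρ ^ (k - K') := by rw [Finset.mul_sum]
            _ ≤ (2 * C * D) * (1 - ρ)⁻¹ := by
                apply mul_le_mul_of_nonneg_left _ (by positivity)
                apply geo_sum_inj_aux ρ hρ0 hρ1 Fhigh (fun k => k - K')
                intro k hk l hl hkl
                have h1 : K' ≤ k := Finset.min'_le _ _ hk
                have h2 : K' ≤ l := Finset.min'_le _ _ hl
                omega
            _ = 2 * C * D * (1 - ρ)⁻¹ := by ring
      -- combine
      have hsumnnl : 0 ≤ ∑ k ∈ Flow, (n k : ℝ) * ‖a k‖ * r ^ (n k - 1) :=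
        Finset.sum_nonneg (fun k _ => hg0 k)
      have hsumnnh : 0 ≤ ∑ k ∈ Fhigh, (n k : ℝ) * ‖a k‖ * r ^ (n k - 1) :=
        Finset.sum_nonneg (fun k _ => hg0 k)
      have hfin : μ r * ∑ k ∈ F, (n k : ℝ) * ‖a k‖ * r ^ (n k - 1)
          = μ r * ∑ k ∈ Flow, (n k : ℝ) * ‖a k‖ * r ^ (n k - 1)
          + μ r * ∑ k ∈ Fhigh, (n k : ℝ) * ‖a k‖ * r ^ (n k - 1) := by
        rw [← hsplit]
        ring
      rw [hM_def, hfin]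
      linarith
  -- ## conclusion
  refine ⟨M, ?_⟩
  intro z hz
  have hz1 : ‖z‖ < 1 := by
    simpa [Complex.dist_eq] using hz
  set r : ℝ := ‖z‖ with hr_def
  have hr0 : 0 ≤ r := norm_nonneg z
  have hμr : 0 < μ r := hμ_pos r ⟨hr0, hz1⟩
  set r' : ℝ := (r + 1) / 2 with hr'_def
  have hr'0 : 0 ≤ r' := by positivity
  have hr'1 : r' < 1 := by rw [hr'_def]; linarith
  have hrr' : r < r' := by rw [hr'_def]; linarith
  have hzball : z ∈ Metric.ball (0:ℂ) r' := by
    rw [Metric.mem_ball, Complex.dist_eq, sub_zero]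
    exact hrr'
  have hder : HasDerivAt (fun w : ℂ => ∑' k, a k * w ^ (n k))
      (∑' k, a k * ((n k : ℂ) * z ^ (n k - 1))) z := by
    apply hasDerivAt_tsum_of_isPreconnected
      (u := fun k => (n k : ℝ) * ‖a k‖ * r' ^ (n k - 1))
      (hsum r' hr'0 hr'1) Metric.isOpen_ball ((convex_ball _ _).isPreconnected)
      (fun k y _ => (hasDerivAt_pow (n k) y).const_mul (a k))
      (fun k y hy => ?_) hzball (hconv z hz) hzball
    have hy' : ‖y‖ ≤ r' := by
      have : dist y 0 < r' := hy
      rw [dist_zero_right] at this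
      exact this.le
    have h1 : ‖y‖ ^ (n k - 1) ≤ r' ^ (n k - 1) := pow_le_pow_left₀ (norm_nonneg y) hy' _
    calc ‖a k * ((n k : ℂ) * y ^ (n k - 1))‖
        = ‖a k‖ * ((n k : ℝ) * ‖y‖ ^ (n k - 1)) := by
          rw [norm_mul, norm_mul, norm_pow, Complex.norm_natCast]
      _ ≤ (n k : ℝ) * ‖a k‖ * r' ^ (n k - 1) := by
          rw [show ‖a k‖ * ((n k : ℝ) * ‖y‖ ^ (n k - 1))
            = (n k : ℝ) * ‖a k‖ * ‖y‖ ^ (n k - 1) by ring]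
          exact mul_le_mul_of_nonneg_left h1 (by positivity)
  have hEq : deriv f z = ∑' k, a k * ((n k : ℂ) * z ^ (n k - 1)) := by
    have hev : f =ᶠ[nhds z] (fun w => ∑' k, a k * w ^ (n k)) := by
      filter_upwards [Metric.isOpen_ball.mem_nhds hz] with w hw using hf w hw
    rw [hev.deriv_eq]
    exact hder.deriv
  have hsummz : Summable (fun k => (n k : ℝ) * ‖a k‖ * r ^ (n k - 1)) :=
    hsum r hr0 hz1
  have hptw : ∀ k, ‖a k * ((n k : ℂ) * z ^ (n k - 1))‖
      = (n k : ℝ) * ‖a k‖ * r ^ (n k - 1) := by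
    intro k
    rw [norm_mul, norm_mul, norm_pow, Complex.norm_natCast,
      ← hr_def]
    ring
  have hnorm : ‖deriv f z‖ ≤
      ∑' k, (n k : ℝ) * ‖a k‖ * r ^ (n k - 1) := by
    rw [hEq]
    calc ‖∑' k, a k * ((n k : ℂ) * z ^ (n k - 1))‖
        ≤ ∑' k, ‖a k * ((n k : ℂ) * z ^ (n k - 1))‖ :=
          norm_tsum_le_tsum_norm (hsummz.congr fun k => (hptw k).symm)
      _ = ∑' k, (n k : ℝ) * ‖a k‖ * r ^ (n k - 1) := tsum_congr hptw
  have htsum_le : μ r * (∑' k, (n k : ℝ) * ‖a k‖ * r ^ (n k - 1)) ≤ M := by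
    have hb : ∀ F : Finset ℕ, ∑ k ∈ F, (n k : ℝ) * ‖a k‖ * r ^ (n k - 1)
        ≤ M / μ r := by
      intro F
      rw [le_div_iff₀ hμr]
      calc (∑ k ∈ F, (n k : ℝ) * ‖a k‖ * r ^ (n k - 1)) * μ r
          = μ r * ∑ k ∈ F, (n k : ℝ) * ‖a k‖ * r ^ (n k - 1) := by ring
        _ ≤ M := hkey r hr0 hz1 F
    have h2 := Summable.tsum_le_of_sum_le hsummz hb
    calc μ r * (∑' k, (n k : ℝ) * ‖a k‖ * r ^ (n k - 1))
        ≤ μ r * (M / μ r) := mul_le_mul_of_nonneg_left h2 hμr.le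
      _ = M := by field_simp
  calc μ r * ‖deriv f z‖
      ≤ μ r * (∑' k, (n k : ℝ) * ‖a k‖ * r ^ (n k - 1)) :=
        mul_le_mul_of_nonneg_left hnorm hμr.le
    _ ≤ M := htsum_le
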